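/- Peres partial transposition criterion: If ρ is a separable density matrix on ℂ^{d_A} ⊗ ℂ^{d_B}, then both partial transpositions ρ^{T_A} and ρ^{T_B} are positive semidefinite. -/

import Mathlib

open scoped BigOperators ComplexOrder

/-- The rank-one matrix `x x*`, with entries `(x x*)_{ij} = x i * conj (x j)`. -/
def vecProjector {d : ℕ} (x : Fin d → ℂ) : Matrix (Fin d) (Fin d) ℂ :=
  fun i j => x i * (starRingEnd ℂ) (x j)

/-- A density matrix on `ℂ^{d_A} ⊗ ℂ^{d_B}` is separable if it is a finite convex combination
of Kronecker products of rank-one projectors onto unit vectors. -/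
def SeparableState {dA dB : ℕ}
    (ρ : Matrix (Fin dA × Fin dB) (Fin dA × Fin dB) ℂ) : Prop :=
  ∃ (K : ℕ) (p : Fin K → ℝ) (x : Fin K → Fin dA → ℂ) (y : Fin K → Fin dB → ℂ),
    (∀ k, 0 ≤ p k) ∧ (∑ k, p k = 1) ∧
    (∀ k, ∑ a, Complex.normSq (x k a) = 1) ∧
    (∀ k, ∑ b, Complex.normSq (y k b) = 1) ∧
    ρ = ∑ k, (p k : ℂ) •
      Matrix.kroneckerMap (· * ·) (vecProjector (x k)) (vecProjector (y k))

/-- Partial transposition with respect to the first factor: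
`(ρ^{T_A})_{(i,μ),(j,ν)} = ρ_{(j,μ),(i,ν)}`. -/
def partialTransposeA {dA dB : ℕ}
    (ρ : Matrix (Fin dA × Fin dB) (Fin dA × Fin dB) ℂ) :
    Matrix (Fin dA × Fin dB) (Fin dA × Fin dB) ℂ :=
  fun p q => ρ (q.1, p.2) (p.1, q.2)

/-- Partial transposition with respect to the second factor:
`(ρ^{T_B})_{(i,μ),(j,ν)} = ρ_{(i,ν),(j,μ)}`. -/
def partialTransposeB {dA dB : ℕ}
    (ρ : Matrix (Fin dA × Fin dB) (Fin dA × Fin dB) ℂ) :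
    Matrix (Fin dA × Fin dB) (Fin dA × Fin dB) ℂ :=
  fun p q => ρ (p.1, q.2) (q.1, p.2)

def rkOne {n : Type*} (w : n → ℂ) : Matrix n n ℂ :=
  fun i j => w i * (starRingEnd ℂ) (w j)

lemma quadform_vecProjector {n : Type*} [Fintype n] (z v : n → ℂ) :
    dotProduct (star v) ((rkOne z).mulVec v)
      = (starRingEnd ℂ) (∑ j, (starRingEnd ℂ) (z j) * v j) * (∑ j, (starRingEnd ℂ) (z j) * v j) := by
  simp only [dotProduct, Matrix.mulVec, dotProduct, rkOne, Pi.star_apply,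
    map_sum, map_mul, Complex.conj_conj, Finset.sum_mul, Finset.mul_sum]
  rw [Finset.sum_comm]
  apply Finset.sum_congr rfl; intro i _
  apply Finset.sum_congr rfl; intro j _
  simp only [Complex.star_def]; ring

lemma sum_smul_vecProjector_posSemidef {n : Type*} [Fintype n] [DecidableEq n] {K : ℕ}
    (p : Fin K → ℝ) (hp : ∀ k, 0 ≤ p k) (z : Fin K → n → ℂ) :
    (∑ k, (p k : ℂ) • rkOne (z k)).PosSemidef := by
  rw [Matrix.posSemidef_iff_dotProduct_mulVec]
  constructor
  · ext i j
    simp only [Matrix.conjTranspose_apply, Matrix.sum_apply, Matrix.smul_apply, vecProjector,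
      smul_eq_mul, star_sum, star_mul', Complex.star_def, Complex.conj_conj, Complex.conj_ofReal]
    exact Finset.sum_congr rfl fun k _ => by simp only [rkOne, Complex.star_def, star_mul', map_mul, Complex.conj_conj, Complex.conj_ofReal]; ring
  · intro v
    have h1 : dotProduct (star v) ((∑ k, (p k : ℂ) • rkOne (z k)).mulVec v)
        = ∑ k, (p k : ℂ) * dotProduct (star v) ((rkOne (z k)).mulVec v) := by
      simp only [Matrix.mulVec, dotProduct, Matrix.sum_apply, Matrix.smul_apply,
        smul_eq_mul, Finset.sum_mul, Finset.mul_sum]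
      rw [Finset.sum_comm]
      conv_lhs => enter [2, x]; rw [Finset.sum_comm]
      rw [Finset.sum_comm]
      apply Finset.sum_congr rfl; intro k _
      rw [Finset.sum_comm]
      apply Finset.sum_congr rfl; intro i _
      apply Finset.sum_congr rfl; intro j _
      ring
    rw [h1]
    apply Finset.sum_nonneg
    intro k _
    rw [quadform_vecProjector]
    set c := ∑ j, (starRingEnd ℂ) (z k j) * v j
    have : (starRingEnd ℂ) c * c = (Complex.normSq c : ℂ) := by
      rw [Complex.normSq_eq_conj_mul_self]
    rw [this, ← Complex.ofReal_mul]
    rw [Complex.zero_le_real]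
    exact mul_nonneg (hp k) (Complex.normSq_nonneg c)

/-- **Peres partial transposition criterion.** If `ρ` is a separable density matrix on
`ℂ^{d_A} ⊗ ℂ^{d_B}`, then both partial transpositions `ρ^{T_A}` and `ρ^{T_B}` are positive
semidefinite. -/
theorem peres_ppt_criterion (dA dB : ℕ)
    (ρ : Matrix (Fin dA × Fin dB) (Fin dA × Fin dB) ℂ)
    (hpsd : ρ.PosSemidef) (htr : ρ.trace = 1) (hsep : SeparableState ρ) :
    (partialTransposeA ρ).PosSemidef ∧ (partialTransposeB ρ).PosSemidef := by
  obtain ⟨K, p, x, y, hp, _, _, _, hρ⟩ := hsep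
  constructor
  · have heq : partialTransposeA ρ
        = ∑ k, (p k : ℂ) • rkOne (fun q : Fin dA × Fin dB =>
            (starRingEnd ℂ) (x k q.1) * y k q.2) := by
      ext q r
      simp only [partialTransposeA, hρ, Matrix.sum_apply, Matrix.smul_apply, smul_eq_mul,
        Matrix.kroneckerMap_apply, vecProjector, map_mul, Complex.conj_conj]
      exact Finset.sum_congr rfl fun k _ => by simp only [rkOne, Complex.star_def, star_mul', map_mul, Complex.conj_conj, Complex.conj_ofReal]; ring
    rw [heq]
    exact sum_smul_vecProjector_posSemidef p hp _
  · have heq : partialTransposeB ρ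
        = ∑ k, (p k : ℂ) • rkOne (fun q : Fin dA × Fin dB =>
            x k q.1 * (starRingEnd ℂ) (y k q.2)) := by
      ext q r
      simp only [partialTransposeB, hρ, Matrix.sum_apply, Matrix.smul_apply, smul_eq_mul,
        Matrix.kroneckerMap_apply, vecProjector, map_mul, Complex.conj_conj]
      exact Finset.sum_congr rfl fun k _ => by simp only [rkOne, Complex.star_def, star_mul', map_mul, Complex.conj_conj, Complex.conj_ofReal]; ring
    rw [heq]
    exact sum_smul_vecProjector_posSemidef p hp _
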